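/- arXiv:2505.00298 — 6 statements merged into one kernel-verified Lean document; each statement's English description precedes it below -/
import Mathlib

section
/- Let D be a digraph of order n and let k be an integer with max{δ⁰(D)+1, 3} ≤ k ≤ n, where δ⁰(D) = min{δ⁺(D), δ⁻(D)} is the minimum semi-degree of D. Then τ_k(D) = 0. -/
/-- A digraph: no loops, no parallel arcs (arcs are a set of ordered pairs). -/
structure Dgraph (V : Type*) where
  Adj : V → V → Prop
  loopless : ∀ v, ¬ Adj v v

namespace Dgraph

variable {V : Type*}

/-- A subdigraph of `D`: a vertex set together with an arc set contained in that of `D`,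
whose arcs join vertices of the vertex set. -/
structure Sub (D : Dgraph V) where
  verts : Set V
  Adj : V → V → Prop
  adj_sub : ∀ ⦃u v : V⦄, Adj u v → D.Adj u v
  mem_left : ∀ ⦃u v : V⦄, Adj u v → u ∈ verts
  mem_right : ∀ ⦃u v : V⦄, Adj u v → v ∈ verts

/-- The degree of a vertex in a subdigraph: out-degree plus in-degree. -/
noncomputable def Sub.deg {D : Dgraph V} (T : D.Sub) (v : V) : ℕ :=
  {w | T.Adj v w}.ncard + {w | T.Adj w v}.ncard

/-- `T` is an out-tree rooted at `r`: `r` belongs to `T`, has in-degree zero, every other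
vertex of `T` has in-degree exactly one, and every vertex of `T` is reachable from `r`. -/
def Sub.IsOutTree {D : Dgraph V} (T : D.Sub) (r : V) : Prop :=
  r ∈ T.verts ∧ (∀ w, ¬ T.Adj w r) ∧
    (∀ v ∈ T.verts, v ≠ r → ∃! u, T.Adj u v) ∧
    ∀ v ∈ T.verts, Relation.ReflTransGen T.Adj r v

/-- A pendant `(S,r)`-tree in `D`: an out-tree rooted at `r` containing `S` in which every
vertex of `S` has degree one. -/
def IsPendantTree (D : Dgraph V) (S : Set V) (r : V) (T : D.Sub) : Prop :=
  T.IsOutTree r ∧ S ⊆ T.verts ∧ ∀ s ∈ S, T.deg s = 1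

/-- Two subdigraphs are internally disjoint (w.r.t. `S`) if they are arc-disjoint and their
common vertex set is exactly `S`. -/
def InternallyDisjoint (D : Dgraph V) (S : Set V) (T₁ T₂ : D.Sub) : Prop :=
  (∀ u v, ¬ (T₁.Adj u v ∧ T₂.Adj u v)) ∧ T₁.verts ∩ T₂.verts = S

/-- `τ_{S,r}(D)`: the maximum number of pairwise internally-disjoint pendant `(S,r)`-trees. -/
noncomputable def tauSr (D : Dgraph V) (S : Set V) (r : V) : ℕ :=
  sSup {m : ℕ | ∃ f : Fin m → D.Sub,
    (∀ i, D.IsPendantTree S r (f i)) ∧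
    ∀ i j, i ≠ j → D.InternallyDisjoint S (f i) (f j)}

/-- `τ_k(D)`: the minimum of `τ_{S,r}(D)` over all `S ⊆ V(D)` with `|S| = k` and `r ∈ S`. -/
noncomputable def tauK (D : Dgraph V) (k : ℕ) : ℕ :=
  sInf {m : ℕ | ∃ (S : Set V) (r : V), S.ncard = k ∧ r ∈ S ∧ m = D.tauSr S r}

end Dgraph

namespace Dgraph

variable {V : Type*} [Fintype V]

/-- If the root `r` has a unique out-neighbor `y`, and `y` has no out-neighbors, then
everything reachable from `r` lies in `{r, y}`; with `|S| ≥ 3` this is absurd. -/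
lemma no_pendant_aux {D : Dgraph V} {S : Set V} {r : V} {T : D.Sub}
    (hT : D.IsPendantTree S r T) {y : V}
    (hxy : ∀ w, T.Adj r w → w = y) (hy : ∀ w, ¬ T.Adj y w)
    (hS3 : 3 ≤ S.ncard) : False := by
  obtain ⟨⟨hrT, hroot, huniq, hreach⟩, hSsub, hdeg⟩ := hT
  have hpair : ({r, y} : Set V).ncard ≤ 2 := by
    refine le_trans (Set.ncard_insert_le _ _) ?_
    simp [Set.ncard_singleton]
  have hdiff : (S \ {r, y}).Nonempty := by
    rw [Set.nonempty_iff_ne_empty]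
    intro h
    have hsub : S ⊆ {r, y} := Set.diff_eq_empty.mp h
    have := Set.ncard_le_ncard hsub (Set.toFinite _)
    omega
  obtain ⟨s, hsS, hs⟩ := hdiff
  have key : ∀ z, Relation.ReflTransGen T.Adj r z → z = r ∨ z = y := by
    intro z hz
    induction hz with
    | refl => exact Or.inl rfl
    | tail hb hbc ih =>
      rcases ih with h | h
      · subst h; exact Or.inr (hxy _ hbc)
      · subst h; exact absurd hbc (hy _)
  rcases key s (hreach s (hSsub hsS)) with h | h <;> simp [h] at hs

lemma no_pendant_out {D : Dgraph V} {S : Set V} {v : V}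
    (hv : v ∈ S) (hN : {w | D.Adj v w} ⊆ S) (hS3 : 3 ≤ S.ncard)
    (T : D.Sub) : ¬ D.IsPendantTree S v T := by
  intro hT
  obtain ⟨⟨hrT, hroot, huniq, hreach⟩, hSsub, hdeg⟩ := hT
  have hdv := hdeg v hv
  have hin : {w | T.Adj w v} = ∅ := by
    ext w; simp [hroot w]
  rw [Dgraph.Sub.deg, hin, Set.ncard_empty] at hdv
  obtain ⟨u, hu⟩ := Set.ncard_eq_one.mp (by omega : {w | T.Adj v w}.ncard = 1)
  have hiff : ∀ w, T.Adj v w → w = u := by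
    intro w hw
    have : w ∈ ({u} : Set V) := hu ▸ hw
    exact this
  have hvu : T.Adj v u := by
    have : u ∈ {w | T.Adj v w} := hu ▸ rfl
    exact this
  have huS : u ∈ S := hN (T.adj_sub hvu)
  have hdu := hdeg u huS
  have hin1 : 0 < {w | T.Adj w u}.ncard := (Set.ncard_pos (Set.toFinite _)).mpr ⟨v, hvu⟩
  have hout0 : {w | T.Adj u w} = ∅ := by
    rw [Dgraph.Sub.deg] at hdu
    exact (Set.ncard_eq_zero (Set.toFinite _)).mp (by omega)
  have hy : ∀ w, ¬ T.Adj u w := by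
    intro w hw
    have : w ∈ ({w | T.Adj u w} : Set V) := hw
    rw [hout0] at this
    exact this
  exact no_pendant_aux ⟨⟨hrT, hroot, huniq, hreach⟩, hSsub, hdeg⟩ hiff hy hS3

lemma no_pendant_in {D : Dgraph V} {S : Set V} {v r : V}
    (hv : v ∈ S) (hr : r ∈ S) (hrv : r ≠ v) (hN : {w | D.Adj w v} ⊆ S) (hS3 : 3 ≤ S.ncard)
    (T : D.Sub) : ¬ D.IsPendantTree S r T := by
  intro hT
  obtain ⟨⟨hrT, hroot, huniq, hreach⟩, hSsub, hdeg⟩ := hT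
  obtain ⟨u, huv, -⟩ := huniq v (hSsub hv) (fun h => hrv h.symm)
  have hdv := hdeg v hv
  have hin1 : 0 < {w | T.Adj w v}.ncard := (Set.ncard_pos (Set.toFinite _)).mpr ⟨u, huv⟩
  rw [Dgraph.Sub.deg] at hdv
  have hvout : {w | T.Adj v w} = ∅ := (Set.ncard_eq_zero (Set.toFinite _)).mp (by omega)
  have hvout' : ∀ w, ¬ T.Adj v w := by
    intro w hw
    have : w ∈ ({w | T.Adj v w} : Set V) := hw
    rw [hvout] at this
    exact this
  have huS : u ∈ S := hN (T.adj_sub huv)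
  have hdu := hdeg u huS
  rw [Dgraph.Sub.deg] at hdu
  have hout1 : 0 < {w | T.Adj u w}.ncard := (Set.ncard_pos (Set.toFinite _)).mpr ⟨v, huv⟩
  have huin : {w | T.Adj w u} = ∅ := (Set.ncard_eq_zero (Set.toFinite _)).mp (by omega)
  by_cases hur : u = r
  · subst hur
    obtain ⟨x, hx⟩ := Set.ncard_eq_one.mp (by omega : {w | T.Adj u w}.ncard = 1)
    have hxv : x = v := by
      have : v ∈ ({x} : Set V) := hx ▸ huv
      exact this.symm
    rw [hxv] at hx
    have hiff : ∀ w, T.Adj u w → w = v := by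
      intro w hw
      have : w ∈ ({v} : Set V) := hx ▸ hw
      exact this
    exact no_pendant_aux ⟨⟨hrT, hroot, huniq, hreach⟩, hSsub, hdeg⟩ hiff hvout' hS3
  · obtain ⟨w, hw, -⟩ := huniq u (T.mem_left huv) hur
    have : w ∈ ({w | T.Adj w u} : Set V) := hw
    rw [huin] at this
    exact this

end Dgraph

/-- If `max{δ⁰(D) + 1, 3} ≤ k ≤ n`, then `τ_k(D) = 0`. -/
theorem tauK_eq_zero_of_large_k {V : Type*} [Fintype V] {n k : ℕ}
    (hn : Fintype.card V = n) (hkn : k ≤ n) (D : Dgraph V)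
    (hk : max (min (⨅ v : V, {w | D.Adj v w}.ncard) (⨅ v : V, {w | D.Adj w v}.ncard) + 1) 3 ≤ k) :
    D.tauK k = 0 := by
  have hk3 : 3 ≤ k := le_trans (le_max_right _ _) hk
  have hV : Nonempty V := by
    rw [← Fintype.card_pos_iff, hn]; omega
  -- It suffices to find S, r with no pendant (S,r)-tree.
  suffices h : ∃ (S : Set V) (r : V), S.ncard = k ∧ r ∈ S ∧
      ∀ T : D.Sub, ¬ D.IsPendantTree S r T by
    obtain ⟨S, r, hScard, hrS, hnone⟩ := h
    have htau : D.tauSr S r = 0 := by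
      have hset : {m : ℕ | ∃ f : Fin m → D.Sub,
          (∀ i, D.IsPendantTree S r (f i)) ∧
          ∀ i j, i ≠ j → D.InternallyDisjoint S (f i) (f j)} = {0} := by
        ext m
        simp only [Set.mem_setOf_eq, Set.mem_singleton_iff]
        constructor
        · rintro ⟨f, hf, -⟩
          by_contra hm
          exact hnone (f ⟨0, Nat.pos_of_ne_zero hm⟩) (hf _)
        · rintro rfl
          exact ⟨Fin.elim0, fun i => i.elim0, fun i => i.elim0⟩
      rw [Dgraph.tauSr, hset, csSup_singleton]
    have hmem : 0 ∈ {m : ℕ | ∃ (S : Set V) (r : V),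
        S.ncard = k ∧ r ∈ S ∧ m = D.tauSr S r} :=
      ⟨S, r, hScard, hrS, htau.symm⟩
    exact Nat.eq_zero_of_le_zero (Nat.sInf_le hmem)
  -- Find a vertex of minimum out- or in-degree at most k - 1.
  have hmin : (⨅ v : V, {w | D.Adj v w}.ncard) + 1 ≤ k ∨
      (⨅ v : V, {w | D.Adj w v}.ncard) + 1 ≤ k := by
    have := le_trans (le_max_left _ _) hk
    omega
  rcases hmin with hmin | hmin
  · -- out-degree case
    obtain ⟨v, hv⟩ : ∃ v : V, {w | D.Adj v w}.ncard = ⨅ v : V, {w | D.Adj v w}.ncard := by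
      have := Nat.sInf_mem (Set.range_nonempty fun v : V => {w | D.Adj v w}.ncard)
      obtain ⟨v, hv⟩ := this
      exact ⟨v, hv⟩
    have hA : (insert v {w | D.Adj v w}).ncard ≤ k := by
      refine le_trans (Set.ncard_insert_le _ _) ?_
      omega
    obtain ⟨S, hAS, -, hScard⟩ := Set.exists_subsuperset_card_eq
      (Set.subset_univ (insert v {w | D.Adj v w})) hA
      (by rw [Set.ncard_univ, Nat.card_eq_fintype_card, hn]; exact hkn)
    refine ⟨S, v, hScard, hAS (Set.mem_insert _ _), ?_⟩
    exact Dgraph.no_pendant_out (hAS (Set.mem_insert _ _))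
      (fun w hw => hAS (Set.mem_insert_of_mem _ hw)) (hScard ▸ hk3)
  · -- in-degree case
    obtain ⟨v, hv⟩ : ∃ v : V, {w | D.Adj w v}.ncard = ⨅ v : V, {w | D.Adj w v}.ncard := by
      have := Nat.sInf_mem (Set.range_nonempty fun v : V => {w | D.Adj w v}.ncard)
      obtain ⟨v, hv⟩ := this
      exact ⟨v, hv⟩
    have hA : (insert v {w | D.Adj w v}).ncard ≤ k := by
      refine le_trans (Set.ncard_insert_le _ _) ?_
      omega
    obtain ⟨S, hAS, -, hScard⟩ := Set.exists_subsuperset_card_eq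
      (Set.subset_univ (insert v {w | D.Adj w v})) hA
      (by rw [Set.ncard_univ, Nat.card_eq_fintype_card, hn]; exact hkn)
    have hvS : v ∈ S := hAS (Set.mem_insert _ _)
    obtain ⟨r, hrS, hrv⟩ : ∃ r ∈ S, r ≠ v := by
      have hdiff : (S \ {v}).Nonempty := by
        rw [Set.nonempty_iff_ne_empty]
        intro h
        have hsub : S ⊆ {v} := Set.diff_eq_empty.mp h
        have := Set.ncard_le_ncard hsub (Set.toFinite _)
        rw [Set.ncard_singleton, hScard] at this
        omega
      obtain ⟨r, hrS, hr⟩ := hdiff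
      exact ⟨r, hrS, by simpa using hr⟩
    refine ⟨S, r, hScard, hrS, ?_⟩
    exact Dgraph.no_pendant_in hvS hrS hrv
      (fun w hw => hAS (Set.mem_insert_of_mem _ hw)) (hScard ▸ hk3)
end

section
/- Let k and n be integers with 3 ≤ k ≤ n, let ↔K_n be the complete symmetric digraph on n vertices, and let e be any arc of ↔K_n. Then τ_k(↔K_n − e) ≤ n − k − 1, where ↔K_n − e denotes the digraph obtained from ↔K_n by deleting the arc e. -/
/-- In a pendant `(S,a)`-tree with `|S| ≥ 3`, the root `a` has a unique child,
and that child lies outside `S`. -/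
lemma child_lemma {V : Type*} [Fintype V] {D : Dgraph V} {S : Set V} {a : V}
    (hS : 3 ≤ S.ncard) (ha : a ∈ S) {T : D.Sub} (hT : D.IsPendantTree S a T) :
    ∃ c, T.Adj a c ∧ c ∉ S := by
  obtain ⟨⟨hav, hroot, huniq, hreach⟩, hSsub, hdeg⟩ := hT
  have hina : {w | T.Adj w a} = (∅ : Set V) := by
    ext w; simp [hroot w]
  have hda := hdeg a ha
  rw [Dgraph.Sub.deg, hina, Set.ncard_empty, Nat.add_zero] at hda
  obtain ⟨c, hc⟩ := Set.ncard_eq_one.mp hda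
  have hac : T.Adj a c := by
    have : c ∈ {w | T.Adj a w} := hc ▸ rfl
    exact this
  have honly : ∀ w, T.Adj a w → w = c := by
    intro w hw
    have : w ∈ ({c} : Set V) := hc ▸ hw
    exact this
  refine ⟨c, hac, ?_⟩
  intro hcS
  have hdc := hdeg c hcS
  have hin : 1 ≤ {w | T.Adj w c}.ncard := by
    have hne : ({w | T.Adj w c} : Set V).Nonempty := ⟨a, hac⟩
    exact (Set.ncard_pos (Set.toFinite _)).mpr hne
  have hout : {w | T.Adj c w}.ncard = 0 := by
    rw [Dgraph.Sub.deg] at hdc; omega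
  have hout' : ∀ w, ¬ T.Adj c w := by
    intro w hw
    have := (Set.ncard_eq_zero (Set.toFinite _)).mp hout
    rw [Set.eq_empty_iff_forall_notMem] at this
    exact this w hw
  have hthird : (S \ {a, c}).Nonempty := by
    rw [Set.nonempty_iff_ne_empty]
    intro h
    have hsub : S ⊆ {a, c} := Set.diff_eq_empty.mp h
    have h1 : S.ncard ≤ ({a, c} : Set V).ncard := Set.ncard_le_ncard hsub (Set.toFinite _)
    have h2 : ({a, c} : Set V).ncard ≤ 2 := by
      have := Set.ncard_insert_le a ({c} : Set V)
      simpa using this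
    omega
  obtain ⟨s, hsS, hs⟩ := hthird
  simp only [Set.mem_insert_iff, Set.mem_singleton_iff, not_or] at hs
  have hr := hreach s (hSsub hsS)
  have key : ∀ v, Relation.ReflTransGen T.Adj a v → v = a ∨ v = c := by
    intro v h
    induction h with
    | refl => exact Or.inl rfl
    | tail h1 h2 ih =>
      rcases ih with rfl | rfl
      · exact Or.inr (honly _ h2)
      · exact absurd h2 (hout' _)
  rcases key s hr with h | h
  · exact hs.1 h
  · exact hs.2 h

/-- For `3 ≤ k ≤ n` and any arc `e = (a, b)` of the complete symmetric digraph `↔K_n`,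
`τ_k(↔K_n − e) ≤ n - k - 1`. -/
theorem tauK_complete_minus_arc {V : Type*} [Fintype V] {n k : ℕ}
    (hn : Fintype.card V = n) (hk3 : 3 ≤ k) (hkn : k ≤ n) (a b : V) (hab : a ≠ b) :
    (Dgraph.mk (fun x y => x ≠ y ∧ ¬ (x = a ∧ y = b)) (fun _ h => h.1 rfl)).tauK k
      ≤ n - k - 1 := by
  classical
  set D : Dgraph V := Dgraph.mk (fun x y => x ≠ y ∧ ¬ (x = a ∧ y = b)) (fun _ h => h.1 rfl)
    with hD
  -- construct S = ↑F with a ∈ F, |F| = k, avoiding b when possible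
  obtain ⟨F, haF, hFcard, hbF⟩ :
      ∃ F : Finset V, a ∈ F ∧ F.card = k ∧ (b ∈ F → n ≤ k) := by
    by_cases h : k = n
    · exact ⟨Finset.univ, Finset.mem_univ a, by rw [Finset.card_univ, hn, h], fun _ => h.ge⟩
    · have hklt : k < n := lt_of_le_of_ne hkn h
      have hsub : ({a} : Finset V) ⊆ Finset.univ \ {b} := by
        intro x hx
        simp only [Finset.mem_singleton] at hx
        subst hx
        simp [hab]
      have hc1 : ({a} : Finset V).card ≤ k := by simp; omega
      have hc2 : k ≤ (Finset.univ \ {b} : Finset V).card := by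
        rw [Finset.card_sdiff_of_subset (Finset.subset_univ _), Finset.card_univ, hn,
          Finset.card_singleton]
        omega
      obtain ⟨F, hsF, hFsub, hFcard⟩ := Finset.exists_subsuperset_card_eq hsub hc1 hc2
      refine ⟨F, hsF (Finset.mem_singleton_self a), hFcard, fun hbmem => ?_⟩
      have := hFsub hbmem
      simp at this
  have hS3 : 3 ≤ ((F : Set V)).ncard := by rw [Set.ncard_coe_finset]; omega
  have haS : a ∈ (F : Set V) := haF
  have h1 : D.tauK k ≤ D.tauSr (F : Set V) a :=
    Nat.sInf_le ⟨(F : Set V), a, by rw [Set.ncard_coe_finset, hFcard], haS, rfl⟩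
  refine le_trans h1 ?_
  apply csSup_le
  · exact ⟨0, fun i => i.elim0, fun i => i.elim0, fun i j _ => i.elim0⟩
  intro m hm
  obtain ⟨f, hpen, hdisj⟩ := hm
  choose g hg1 hg2 using fun i => child_lemma hS3 haS (hpen i)
  have hgb : ∀ i, g i ≠ b := by
    intro i h
    have h2 := (f i).adj_sub (hg1 i)
    rw [h] at h2
    exact h2.2 ⟨rfl, rfl⟩
  have hginj : Function.Injective g := by
    intro i j hij
    by_contra hne
    have hd := hdisj i j hne
    have hmem : g i ∈ (f i).verts ∩ (f j).verts :=
      ⟨(f i).mem_right (hg1 i), hij ▸ (f j).mem_right (hg1 j)⟩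
    rw [hd.2] at hmem
    exact hg2 i hmem
  have hmemG : ∀ i, g i ∈ Finset.univ \ insert b F := by
    intro i
    simp only [Finset.mem_sdiff, Finset.mem_univ, Finset.mem_insert, not_or, true_and]
    exact ⟨hgb i, fun h => hg2 i h⟩
  have hmG : m ≤ (Finset.univ \ insert b F).card := by
    have := Finset.card_le_card_of_injOn (s := (Finset.univ : Finset (Fin m))) g (fun i _ => hmemG i) hginj.injOn
    simpa using this
  have hcardG : (Finset.univ \ insert b F).card = n - (insert b F).card := by
    rw [Finset.card_sdiff_of_subset (Finset.subset_univ _), Finset.card_univ, hn]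
  by_cases hbF' : b ∈ F
  · have hnk := hbF hbF'
    have : (insert b F).card = k := by rw [Finset.insert_eq_self.mpr hbF', hFcard]
    omega
  · have : (insert b F).card = k + 1 := by rw [Finset.card_insert_of_notMem hbF', hFcard]
    omega
end

section
/- Let k and n be integers with 3 ≤ k ≤ n and let D be a digraph of order n. Then τ_k(D) ≤ min over all S ⊆ V(D) with |S| = k and all r ∈ S of ⌊ |(V(D)∖S, S∖{r})_D| / (k−1) ⌋, where (A, B)_D denotes the set of arcs of D going from A to B. -/
lemma pendant_in_nbr {V : Type*} [Fintype V] {D : Dgraph V} {S : Set V} {r : V} {T : D.Sub}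
    (hT : D.IsPendantTree S r T) (hk : 3 ≤ S.ncard) (hr : r ∈ S)
    {s : V} (hs : s ∈ S) (hsr : s ≠ r) :
    ∃ u, T.Adj u s ∧ u ∉ S ∧ ∀ w, T.Adj w s → w = u := by
  obtain ⟨⟨hrv, hrin, huniq, hreach⟩, hSv, hdeg⟩ := hT
  obtain ⟨u, hu, hu'⟩ := huniq s (hSv hs) hsr
  -- in-set of s is {u}
  have hin : {w | T.Adj w s} = {u} := by
    ext w; simp only [Set.mem_setOf_eq, Set.mem_singleton_iff]
    exact ⟨hu' w, fun h => h ▸ hu⟩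
  have hds := hdeg s hs
  rw [Dgraph.Sub.deg, hin, Set.ncard_singleton] at hds
  have hout : {w | T.Adj s w} = ∅ := by
    rw [← Set.ncard_eq_zero (Set.toFinite _)]; omega
  have houts : ∀ w, ¬ T.Adj s w := fun w hw => by
    have : w ∈ ({} : Set V) := hout ▸ hw
    exact this
  refine ⟨u, hu, ?_, hu'⟩
  intro huS
  by_cases hur : u = r
  · subst hur
    -- out-set of r is {s}
    have hinr : {w | T.Adj w u} = ∅ := Set.eq_empty_iff_forall_notMem.2 (fun w => hrin w)
    have hdr := hdeg u hr
    rw [Dgraph.Sub.deg, hinr, Set.ncard_empty] at hdr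
    have houtr1 : {w | T.Adj u w}.ncard = 1 := by omega
    have hsout : s ∈ {w | T.Adj u w} := hu
    have houtr : {w | T.Adj u w} = {s} := by
      obtain ⟨a, ha⟩ := Set.ncard_eq_one.1 houtr1
      rw [ha] at hsout ⊢
      rw [Set.mem_singleton_iff.1 hsout]
    have houtr' : ∀ w, T.Adj u w → w = s := fun w hw => by
      have : w ∈ ({s} : Set V) := houtr ▸ hw
      exact this
    -- find s' ∈ S, s' ≠ r, s' ≠ s
    have : ∃ s' ∈ S, s' ≠ u ∧ s' ≠ s := by
      by_contra h
      push_neg at h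
      have hsub : S ⊆ {u, s} := by
        intro x hx
        rcases eq_or_ne x u with h1 | h1
        · exact Or.inl h1
        · exact Or.inr (h x hx h1)
      have := Set.ncard_le_ncard hsub (Set.toFinite _)
      have h2 : ({u, s} : Set V).ncard ≤ 2 :=
        le_trans (Set.ncard_insert_le _ _) (by simp [Set.ncard_singleton])
      omega
    obtain ⟨s', hs'S, hs'r, hs's⟩ := this
    have := hreach s' (hSv hs'S)
    rcases this.cases_head with h | ⟨c, hc, hc'⟩
    · exact hs'r h.symm
    · have hcs : c = s := houtr' c hc
      subst hcs
      rcases hc'.cases_head with h | ⟨d, hd, _⟩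
      · exact hs's h.symm
      · exact houts d hd
  · -- u ∈ S, u ≠ r: degree contradiction
    have hdu := hdeg u huS
    have h1 : s ∈ {w | T.Adj u w} := hu
    have h2 : 1 ≤ {w | T.Adj u w}.ncard := Set.Nonempty.ncard_pos (hs := Set.toFinite _) ⟨s, h1⟩
    obtain ⟨u', hu'', _⟩ := huniq u (hSv huS) hur
    have h3 : 1 ≤ {w | T.Adj w u}.ncard := Set.Nonempty.ncard_pos (hs := Set.toFinite _) ⟨u', hu''⟩
    rw [Dgraph.Sub.deg] at hdu
    omega

/-- For `3 ≤ k ≤ n`, `τ_k(D)` is at most `⌊|(V(D) \ S, S \ {r})_D| / (k-1)⌋` for every `S`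
with `|S| = k` and every `r ∈ S` (i.e. at most the minimum of these quantities). -/
theorem tauK_le_arc_cut_bound {V : Type*} [Fintype V] {n k : ℕ}
    (hn : Fintype.card V = n) (hk3 : 3 ≤ k) (hkn : k ≤ n) (D : Dgraph V) :
    ∀ S : Set V, S.ncard = k → ∀ r ∈ S,
      D.tauK k ≤ {p : V × V | D.Adj p.1 p.2 ∧ p.1 ∉ S ∧ p.2 ∈ S ∧ p.2 ≠ r}.ncard / (k - 1) := by
  intro S hS r hr
  set A : Set (V × V) := {p : V × V | D.Adj p.1 p.2 ∧ p.1 ∉ S ∧ p.2 ∈ S ∧ p.2 ≠ r} with hA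
  have h1 : D.tauK k ≤ D.tauSr S r := Nat.sInf_le ⟨S, r, hS, hr, rfl⟩
  refine h1.trans (csSup_le' ?_)
  rintro m ⟨f, hf, hdisj⟩
  rw [Nat.le_div_iff_mul_le (by omega)]
  have hkS : 3 ≤ S.ncard := by omega
  -- for each tree and each s ∈ S \ {r}, pick the in-neighbor of s
  have key : ∀ (i : Fin m) (s : ↥(S \ {r})),
      ∃ u, (f i).Adj u s.1 ∧ u ∉ S ∧ ∀ w, (f i).Adj w s.1 → w = u := by
    rintro i ⟨s, hs, hsr⟩
    exact pendant_in_nbr (hf i) hkS hr hs hsr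
  choose g hg1 hg2 hg3 using key
  have hFmem : ∀ (i : Fin m) (s : ↥(S \ {r})), (g i s, s.1) ∈ A := by
    rintro i ⟨s, hs, hsr⟩
    exact ⟨(f i).adj_sub (hg1 i ⟨s, hs, hsr⟩), hg2 i ⟨s, hs, hsr⟩, hs, hsr⟩
  set F : Fin m × ↥(S \ {r}) → ↥A := fun p => ⟨(g p.1 p.2, p.2.1), hFmem p.1 p.2⟩ with hF
  have hFinj : Function.Injective F := by
    rintro ⟨i, s⟩ ⟨j, s'⟩ h
    have h' : (g i s, s.1) = (g j s', s'.1) := congrArg Subtype.val h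
    have hss : s = s' := Subtype.ext (congrArg Prod.snd h')
    subst hss
    have huu : g i s = g j s := congrArg Prod.fst h'
    rcases eq_or_ne i j with hij | hij
    · rw [hij]
    · exact absurd ⟨hg1 i s, huu ▸ hg1 j s⟩ ((hdisj i j hij).1 (g i s) s.1)
  have hcard : Nat.card (Fin m × ↥(S \ {r})) ≤ Nat.card ↥A :=
    Nat.card_le_card_of_injective F hFinj
  rw [Nat.card_prod, Nat.card_eq_fintype_card, Fintype.card_fin,
    Nat.card_coe_set_eq, Nat.card_coe_set_eq,
    Set.ncard_diff_singleton_of_mem hr, hS] at hcard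
  exact hcard
end

section
/- Let k and n be integers with 3 ≤ k ≤ n and let D be a digraph of order n. Then 0 ≤ τ_k(D) + τ_k(D^c) ≤ n − k, where D^c is the complement digraph of D. -/
/-- The complement digraph of `D`. -/
def Dgraph.compl {V : Type*} (D : Dgraph V) : Dgraph V :=
  ⟨fun x y => x ≠ y ∧ ¬ D.Adj x y, fun _ h => h.1 rfl⟩


section Aux
variable {V : Type*} [Fintype V]

/-- In a pendant `(S,r)`-tree with `|S| ≥ 3`, the root has an out-neighbor not in `S`. -/
lemma root_out_nbr {D : Dgraph V} {S : Set V} {r : V} {T : D.Sub}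
    (hk : 3 ≤ S.ncard) (hr : r ∈ S) (hT : D.IsPendantTree S r T) :
    ∃ x, T.Adj r x ∧ x ∉ S := by
  obtain ⟨⟨hrv, hin, huniq, hreach⟩, hSsub, hdeg⟩ := hT
  have hinr : {w | T.Adj w r} = (∅ : Set V) := by
    ext w; simp [hin w]
  have hdr := hdeg r hr
  rw [Dgraph.Sub.deg, hinr] at hdr
  simp only [Set.ncard_empty, add_zero] at hdr
  obtain ⟨x, hx⟩ := Set.ncard_eq_one.mp hdr
  have hrx : T.Adj r x := by
    have : x ∈ {w | T.Adj r w} := by rw [hx]; exact rfl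
    exact this
  refine ⟨x, hrx, fun hxS => ?_⟩
  -- x ∈ S would force x to have out-degree 0, blocking reachability of a third leaf
  have hdx := hdeg x hxS
  rw [Dgraph.Sub.deg] at hdx
  have hinx : 0 < {w | T.Adj w x}.ncard :=
    (Set.ncard_pos (Set.toFinite _)).mpr ⟨r, hrx⟩
  have houtx : {w | T.Adj x w}.ncard = 0 := by omega
  have houtx' : {w | T.Adj x w} = (∅ : Set V) :=
    Set.ncard_eq_zero (Set.toFinite _) |>.mp houtx
  -- pick a third vertex of S
  have hS3 : ∃ s ∈ S, s ≠ r ∧ s ≠ x := by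
    by_contra h
    push_neg at h
    have hsub : S ⊆ {r, x} := by
      intro s hs
      rcases eq_or_ne s r with h1 | h1
      · exact Or.inl h1
      · exact Or.inr (h s hs h1)
    have := Set.ncard_le_ncard hsub (Set.toFinite _)
    have h2 : ({r, x} : Set V).ncard ≤ 2 := by
      have := Set.ncard_insert_le r ({x} : Set V)
      simpa using this
    omega
  obtain ⟨s, hsS, hsr, hsx⟩ := hS3
  have hreach_s := hreach s (hSsub hsS)
  rcases hreach_s.cases_head with h | ⟨c, hrc, hcs⟩
  · exact hsr h.symm
  · have hcx : c = x := by
      have : c ∈ {w | T.Adj r w} := hrc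
      rw [hx] at this; exact this
    rw [hcx] at hcs
    rcases hcs.cases_head with h | ⟨c', hxc', _⟩
    · exact hsx h.symm
    · have : c' ∈ {w | T.Adj x w} := hxc'
      rw [houtx'] at this; exact this

/-- Counting lemma: families of pendant trees in `D` and `D.compl` together have
at most `|V| - k` members. -/
lemma count_lemma {D : Dgraph V} {S : Set V} {r : V} {k : ℕ}
    (hk : 3 ≤ k) (hS : S.ncard = k) (hr : r ∈ S) {m m' : ℕ}
    (f : Fin m → D.Sub) (hf : ∀ i, D.IsPendantTree S r (f i))
    (hfd : ∀ i j, i ≠ j → D.InternallyDisjoint S (f i) (f j))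
    (g : Fin m' → D.compl.Sub) (hg : ∀ i, D.compl.IsPendantTree S r (g i))
    (hgd : ∀ i j, i ≠ j → D.compl.InternallyDisjoint S (g i) (g j)) :
    m + m' ≤ Fintype.card V - k := by
  have hk' : 3 ≤ S.ncard := hS ▸ hk
  choose xf hxf hxfS using fun i => root_out_nbr hk' hr (hf i)
  choose xg hxg hxgS using fun i => root_out_nbr hk' hr (hg i)
  set F : Fin m ⊕ Fin m' → ↥(Sᶜ) := Sum.elim (fun i => ⟨xf i, hxfS i⟩)
    (fun i => ⟨xg i, hxgS i⟩) with hF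
  have hFinj : Function.Injective F := by
    rintro (i | i) (j | j) hij <;> simp only [hF, Sum.elim_inl, Sum.elim_inr,
      Subtype.mk.injEq] at hij
    · by_contra hne
      have hne' : i ≠ j := by rintro rfl; exact hne rfl
      have hd := (hfd i j hne').2
      have : xf i ∈ (f i).verts ∩ (f j).verts :=
        ⟨(f i).mem_right (hxf i), hij ▸ (f j).mem_right (hxf j)⟩
      rw [hd] at this
      exact hxfS i this
    · have h1 : D.Adj r (xf i) := (f i).adj_sub (hxf i)
      have h2 : r ≠ xg j ∧ ¬ D.Adj r (xg j) := (g j).adj_sub (hxg j)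
      exact absurd (hij ▸ h1) h2.2
    · have h1 : D.Adj r (xf j) := (f j).adj_sub (hxf j)
      have h2 : r ≠ xg i ∧ ¬ D.Adj r (xg i) := (g i).adj_sub (hxg i)
      exact absurd (hij ▸ h1) h2.2
    · by_contra hne
      have hne' : i ≠ j := by rintro rfl; exact hne rfl
      have hd := (hgd i j hne').2
      have : xg i ∈ (g i).verts ∩ (g j).verts :=
        ⟨(g i).mem_right (hxg i), hij ▸ (g j).mem_right (hxg j)⟩
      rw [hd] at this
      exact hxgS i this
  have hcard := Nat.card_le_card_of_injective F hFinj
  simp only [Nat.card_sum, Nat.card_eq_fintype_card, Fintype.card_sum, Fintype.card_fin] at hcard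
  have hcompl : Nat.card ↥(Sᶜ) = Fintype.card V - k := by
    have h1 : S.ncard + Sᶜ.ncard = Nat.card V := Set.ncard_add_ncard_compl S
    rw [Nat.card_eq_fintype_card] at h1
    have h2 : Nat.card ↥(Sᶜ) = Sᶜ.ncard := (Nat.card_coe_set_eq _).symm ▸ rfl
    omega
  omega

end Aux

/-- Nordhaus–Gaddum: for `3 ≤ k ≤ n`, `0 ≤ τ_k(D) + τ_k(D^c) ≤ n - k`. -/
theorem tauK_nordhaus_gaddum_sum {V : Type*} [Fintype V] {n k : ℕ}
    (hn : Fintype.card V = n) (hk3 : 3 ≤ k) (hkn : k ≤ n) (D : Dgraph V) :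
    0 ≤ D.tauK k + D.compl.tauK k ∧ D.tauK k + D.compl.tauK k ≤ n - k := by
  refine ⟨Nat.zero_le _, ?_⟩
  -- choose a set S of size k and a root r
  obtain ⟨t, _, ht⟩ := Finset.exists_subset_card_eq (s := (Finset.univ : Finset V)) (n := k)
    (by rw [Finset.card_univ, hn]; exact hkn)
  have htne : t.Nonempty := Finset.card_pos.mp (by omega)
  obtain ⟨r, hr⟩ := htne
  set S : Set V := ↑t with hSdef
  have hSn : S.ncard = k := by rw [hSdef, Set.ncard_coe_finset, ht]
  have hrS : r ∈ S := hr
  -- the sets defining tauSr are nonempty and bounded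
  have key : ∀ (E : Dgraph V), (0 : ℕ) ∈ {m : ℕ | ∃ f : Fin m → E.Sub,
      (∀ i, E.IsPendantTree S r (f i)) ∧
      ∀ i j, i ≠ j → E.InternallyDisjoint S (f i) (f j)} := by
    intro E
    exact ⟨Fin.elim0, fun i => i.elim0, fun i => i.elim0⟩
  have bddD : ∀ m ∈ {m : ℕ | ∃ f : Fin m → D.Sub,
      (∀ i, D.IsPendantTree S r (f i)) ∧
      ∀ i j, i ≠ j → D.InternallyDisjoint S (f i) (f j)},
      m ≤ Fintype.card V - k := by
    rintro m ⟨f, hf, hfd⟩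
    have := count_lemma hk3 hSn hrS f hf hfd Fin.elim0 (fun i => i.elim0) (fun i => i.elim0)
    omega
  have bddC : ∀ m ∈ {m : ℕ | ∃ f : Fin m → D.compl.Sub,
      (∀ i, D.compl.IsPendantTree S r (f i)) ∧
      ∀ i j, i ≠ j → D.compl.InternallyDisjoint S (f i) (f j)},
      m ≤ Fintype.card V - k := by
    rintro m ⟨f, hf, hfd⟩
    have := count_lemma hk3 hSn hrS Fin.elim0 (fun i => i.elim0) (fun i => i.elim0) f hf hfd
    omega
  -- tauSr values are achieved
  have hmemD : D.tauSr S r ∈ _ := Nat.sSup_mem ⟨0, key D⟩ ⟨_, fun m hm => bddD m hm⟩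
  have hmemC : D.compl.tauSr S r ∈ _ := Nat.sSup_mem ⟨0, key D.compl⟩ ⟨_, fun m hm => bddC m hm⟩
  obtain ⟨f, hf, hfd⟩ := hmemD
  obtain ⟨g, hg, hgd⟩ := hmemC
  have hsum : D.tauSr S r + D.compl.tauSr S r ≤ Fintype.card V - k :=
    count_lemma hk3 hSn hrS f hf hfd g hg hgd
  have h1 : D.tauK k ≤ D.tauSr S r := Nat.sInf_le ⟨S, r, hSn, hrS, rfl⟩
  have h2 : D.compl.tauK k ≤ D.compl.tauSr S r := Nat.sInf_le ⟨S, r, hSn, hrS, rfl⟩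
  rw [← hn]
  omega
end

section
/- Let k and n be integers with 3 ≤ k ≤ n and let D be a digraph of order n. Then 0 ≤ τ_k(D) · τ_k(D^c) ≤ ⌊((n−k)/2)²⌋, where D^c is the complement digraph of D. -/
/-- In a pendant `(S,r)`-tree with `|S| ≥ 3`, the root has a unique out-neighbor
and it lies outside `S`. -/
lemma Dgraph.exists_out_arc {V : Type*} [Fintype V] (D : Dgraph V) {S : Set V} {r : V}
    (h3 : 3 ≤ S.ncard) (hr : r ∈ S) {T : D.Sub} (hT : D.IsPendantTree S r T) :
    ∃ x, T.Adj r x ∧ x ∉ S := by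
  obtain ⟨⟨hrv, hin, huniq, hreach⟩, hSsub, hdeg⟩ := hT
  have hin0 : {w | T.Adj w r} = (∅ : Set V) := by
    ext w; simp [hin w]
  have hdr := hdeg r hr
  rw [Dgraph.Sub.deg, hin0] at hdr
  simp only [Set.ncard_empty, Nat.add_zero] at hdr
  obtain ⟨x, hx⟩ := Set.ncard_eq_one.mp hdr
  have hrx : T.Adj r x := by
    have := Set.ext_iff.mp hx x
    exact this.mpr rfl
  refine ⟨x, hrx, ?_⟩
  intro hxS
  have hxr : x ≠ r := by
    intro h
    rw [h] at hrx
    exact D.loopless r (T.adj_sub hrx)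
  have hxv : x ∈ T.verts := T.mem_right hrx
  have hdx := hdeg x hxS
  obtain ⟨u, hu, huu⟩ := huniq x hxv hxr
  have hinx : {w | T.Adj w x} = {u} := by
    ext w
    simp only [Set.mem_setOf_eq, Set.mem_singleton_iff]
    exact ⟨fun h => huu w h, fun h => h ▸ hu⟩
  rw [Dgraph.Sub.deg, hinx, Set.ncard_singleton] at hdx
  have houtx : {w | T.Adj x w} = (∅ : Set V) :=
    (Set.ncard_eq_zero (Set.toFinite _)).mp (by omega)
  have hreach2 : ∀ v, Relation.ReflTransGen T.Adj r v → v = r ∨ v = x := by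
    intro v h
    induction h with
    | refl => exact Or.inl rfl
    | @tail b c hab hbc ih =>
      rcases ih with rfl | rfl
      · right
        have : c ∈ ({x} : Set V) := hx ▸ hbc
        exact this
      · exact absurd (houtx ▸ hbc : c ∈ (∅ : Set V)) (Set.notMem_empty c)
  obtain ⟨s, hsS, hs⟩ : ∃ s ∈ S, s ∉ ({r, x} : Set V) := by
    by_contra h
    push_neg at h
    have hsub : S ⊆ ({r, x} : Set V) := fun s hs => h s hs
    have h1 := Set.ncard_le_ncard hsub (Set.toFinite _)
    have h2 : Set.ncard ({r, x} : Set V) ≤ 2 := by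
      refine le_trans (Set.ncard_insert_le _ _) ?_
      simp
    omega
  rcases hreach2 s (hreach s (hSsub hsS)) with rfl | rfl <;> simp at hs

lemma Dgraph.sum_bound {V : Type*} [Fintype V] (D : Dgraph V) {S : Set V} {r : V}
    (h3 : 3 ≤ S.ncard) (hr : r ∈ S) {a b : ℕ}
    (f : Fin a → D.Sub) (hf : ∀ i, D.IsPendantTree S r (f i))
    (hfd : ∀ i j, i ≠ j → D.InternallyDisjoint S (f i) (f j))
    (g : Fin b → D.compl.Sub) (hg : ∀ i, D.compl.IsPendantTree S r (g i))
    (hgd : ∀ i j, i ≠ j → D.compl.InternallyDisjoint S (g i) (g j)) :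
    a + b + S.ncard ≤ Fintype.card V := by
  classical
  choose x hx hxS using fun i => D.exists_out_arc h3 hr (hf i)
  choose y hy hyS using fun j => D.compl.exists_out_arc h3 hr (hg j)
  set F : Fin a ⊕ Fin b → ↥(Sᶜ) := fun z => match z with
    | .inl i => ⟨x i, hxS i⟩
    | .inr j => ⟨y j, hyS j⟩ with hF
  have hcross : ∀ i j, x i ≠ y j := by
    intro i j h
    have h1 : D.Adj r (x i) := (f i).adj_sub (hx i)
    have h2 := (g j).adj_sub (hy j)
    rw [← h] at h2
    exact h2.2 h1
  have hinj : Function.Injective F := by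
    rintro (i | i) (j | j) h
    · simp only [hF, Subtype.mk.injEq] at h
      by_contra hne
      have hij : i ≠ j := fun e => hne (by rw [e])
      have hmem : x i ∈ (f i).verts ∩ (f j).verts :=
        ⟨(f i).mem_right (hx i), h ▸ (f j).mem_right (hx j)⟩
      rw [(hfd i j hij).2] at hmem
      exact hxS i hmem
    · simp only [hF, Subtype.mk.injEq] at h
      exact absurd h (hcross i j)
    · simp only [hF, Subtype.mk.injEq] at h
      exact absurd h.symm (hcross j i)
    · simp only [hF, Subtype.mk.injEq] at h
      by_contra hne
      have hij : i ≠ j := fun e => hne (by rw [e])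
      have hmem : y i ∈ (g i).verts ∩ (g j).verts :=
        ⟨(g i).mem_right (hy i), h ▸ (g j).mem_right (hy j)⟩
      rw [(hgd i j hij).2] at hmem
      exact hyS i hmem
  have hcard : a + b ≤ Fintype.card ↥(Sᶜ) := by
    have := Fintype.card_le_of_injective F hinj
    simpa using this
  have hcompl : Fintype.card ↥(Sᶜ) = Fintype.card V - Fintype.card ↥S :=
    Fintype.card_compl_set S
  have hS : Fintype.card ↥S = S.ncard := by
    rw [Set.ncard_eq_toFinset_card', Set.toFinset_card]
  have hSle : Fintype.card ↥S ≤ Fintype.card V := Fintype.card_le_of_injective _ Subtype.val_injective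
  omega

/-- Nordhaus–Gaddum: for `3 ≤ k ≤ n`, `0 ≤ τ_k(D) · τ_k(D^c) ≤ ⌊((n-k)/2)²⌋`. -/
theorem tauK_nordhaus_gaddum_prod {V : Type*} [Fintype V] {n k : ℕ}
    (hn : Fintype.card V = n) (hk3 : 3 ≤ k) (hkn : k ≤ n) (D : Dgraph V) :
    0 ≤ D.tauK k * D.compl.tauK k ∧
      D.tauK k * D.compl.tauK k ≤ ⌊(((n : ℝ) - k) / 2) ^ 2⌋₊ := by
  classical
  refine ⟨Nat.zero_le _, ?_⟩
  obtain ⟨t, -, htcard⟩ := Finset.exists_subset_card_eq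
    (s := (Finset.univ : Finset V)) (n := k) (by rw [Finset.card_univ, hn]; exact hkn)
  obtain ⟨r, hrt⟩ := Finset.card_pos.mp (by omega : 0 < t.card)
  set S : Set V := (↑t : Set V) with hSdef
  have hScard : S.ncard = k := by rw [hSdef, Set.ncard_coe_finset, htcard]
  have hrS : r ∈ S := hrt
  have h3 : 3 ≤ S.ncard := by omega
  have h1 : D.tauK k ≤ D.tauSr S r := Nat.sInf_le ⟨S, r, hScard, hrS, rfl⟩
  have h2 : D.compl.tauK k ≤ D.compl.tauSr S r := Nat.sInf_le ⟨S, r, hScard, hrS, rfl⟩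
  set A := {m : ℕ | ∃ f : Fin m → D.Sub,
    (∀ i, D.IsPendantTree S r (f i)) ∧
    ∀ i j, i ≠ j → D.InternallyDisjoint S (f i) (f j)} with hA
  set B := {m : ℕ | ∃ f : Fin m → D.compl.Sub,
    (∀ i, D.compl.IsPendantTree S r (f i)) ∧
    ∀ i j, i ≠ j → D.compl.InternallyDisjoint S (f i) (f j)} with hB
  have hA0 : (0 : ℕ) ∈ A := ⟨Fin.elim0, fun i => i.elim0, fun i => i.elim0⟩
  have hB0 : (0 : ℕ) ∈ B := ⟨Fin.elim0, fun i => i.elim0, fun i => i.elim0⟩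
  have hkey : ∀ a ∈ A, ∀ b ∈ B, a + b + k ≤ n := by
    rintro a ⟨f, hf, hfd⟩ b ⟨g, hg, hgd⟩
    have := D.sum_bound h3 hrS f hf hfd g hg hgd
    omega
  have hAbdd : BddAbove A := ⟨n, fun m hm => by have := hkey m hm 0 hB0; omega⟩
  have hBbdd : BddAbove B := ⟨n, fun m hm => by have := hkey 0 hA0 m hm; omega⟩
  have haA : sSup A ∈ A := Nat.sSup_mem ⟨0, hA0⟩ hAbdd
  have hbB : sSup B ∈ B := Nat.sSup_mem ⟨0, hB0⟩ hBbdd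
  set a := sSup A with hadef
  set b := sSup B with hbdef
  have hsum : a + b + k ≤ n := hkey _ haA _ hbB
  have htau1 : D.tauSr S r = a := rfl
  have htau2 : D.compl.tauSr S r = b := rfl
  refine le_trans (Nat.mul_le_mul (h1.trans htau1.le) (h2.trans htau2.le)) ?_
  apply Nat.le_floor
  have hcast : ((a : ℝ)) + (b : ℝ) + (k : ℝ) ≤ (n : ℝ) := by
    exact_mod_cast hsum
  have ha0 : (0:ℝ) ≤ (a : ℝ) := Nat.cast_nonneg _
  have hb0 : (0:ℝ) ≤ (b : ℝ) := Nat.cast_nonneg _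
  push_cast
  nlinarith [sq_nonneg ((a : ℝ) - (b : ℝ)), sq_nonneg ((a : ℝ) + (b : ℝ))]
end

section
/- Let G be a tripartite graph with 3-partition (A, B, C) such that |A| = |B| = |C| = ℓ for an integer ℓ ≥ 2, let k ≥ 3 be an integer, and let D be the symmetric digraph constructed from G as described in the context, with S = {r, s₁, …, s_{k−1}} and root r. Then τ_{S,r}(D) ≥ ℓ if and only if there is a partition of V(G) into ℓ disjoint 3-element sets V₁, …, V_ℓ such that each V_i contains exactly one vertex of A, one vertex of B and one vertex of C, and the induced subgraph G[V_i] is connected for every i. -/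
/-- The arcs of the symmetric digraph `D` constructed from a tripartite graph `G` with
parts `(A, B, C)` in Theorem 2.4.  The extra vertices are encoded by
`Option (Fin (k-1))`: `none` is the root `r` and `some i` is `s_{i+1}`
(so `some 0 = s₁`).  Arcs: both orientations of every edge of `G`, both arcs between `r`
and every vertex of `A`, between `s₁` and every vertex of `B`, and between each `s_i`
(`2 ≤ i ≤ k-1`) and every vertex of `C`. -/
def triAdj {V : Type*} (G : SimpleGraph V) (A B C : Set V) (k : ℕ) :
    V ⊕ Option (Fin (k - 1)) → V ⊕ Option (Fin (k - 1)) → Prop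
  | Sum.inl x, Sum.inl y => G.Adj x y
  | Sum.inl x, Sum.inr none => x ∈ A
  | Sum.inr none, Sum.inl x => x ∈ A
  | Sum.inl x, Sum.inr (some i) => ((i : ℕ) = 0 ∧ x ∈ B) ∨ ((i : ℕ) ≠ 0 ∧ x ∈ C)
  | Sum.inr (some i), Sum.inl x => ((i : ℕ) = 0 ∧ x ∈ B) ∨ ((i : ℕ) ≠ 0 ∧ x ∈ C)
  | Sum.inr _, Sum.inr _ => False

/-- The symmetric digraph `D` constructed from the tripartite graph `G` in Theorem 2.4. -/
def triD {V : Type*} (G : SimpleGraph V) (A B C : Set V) (k : ℕ) :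
    Dgraph (V ⊕ Option (Fin (k - 1))) where
  Adj := triAdj G A B C k
  loopless := by
    rintro (x | e) h
    · exact G.loopless.irrefl x h
    · cases e <;> exact h


set_option linter.unusedSectionVars false
set_option linter.unnecessarySimpa false

section Helpers

open Dgraph

variable {V : Type*} [Fintype V] {k : ℕ} {G : SimpleGraph V} {A B C : Set V}

/-- Extraction: the unique out-arc of the root in a pendant tree. -/
lemma tree_root_arc (T : (triD G A B C k).Sub)
    (hT : (triD G A B C k).IsPendantTree (Set.range Sum.inr) (Sum.inr none) T) :
    ∃ a, a ∈ A ∧ T.Adj (Sum.inr none) (Sum.inl a) ∧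
      ∀ w, T.Adj (Sum.inr none) w → w = Sum.inl a := by
  have hdeg := hT.2.2 (Sum.inr none) ⟨none, rfl⟩
  have hin : {w | T.Adj w (Sum.inr none)} = ∅ := by
    ext w; simp [hT.1.2.1 w]
  rw [Sub.deg, hin, Set.ncard_empty] at hdeg
  obtain ⟨w, hw⟩ := Set.ncard_eq_one.mp (by omega : {w | T.Adj (Sum.inr none) w}.ncard = 1)
  have hwmem : T.Adj (Sum.inr none) w := by rw [Set.ext_iff] at hw; exact (hw w).mpr rfl
  have hD := T.adj_sub hwmem
  match w, hD with
  | Sum.inl x, hD =>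
    exact ⟨x, hD, hwmem, fun u hu => by
      have := (Set.ext_iff.mp hw u).mp hu; simpa using this⟩
  | Sum.inr none, hD => exact hD.elim
  | Sum.inr (some j), hD => exact hD.elim

/-- Extraction: the unique in-arc of `s_j` in a pendant tree, and that `s_j` has no out-arc. -/
lemma tree_s_arc (j : Fin (k - 1)) (T : (triD G A B C k).Sub)
    (hT : (triD G A B C k).IsPendantTree (Set.range Sum.inr) (Sum.inr none) T) :
    ∃ x, T.Adj (Sum.inl x) (Sum.inr (some j)) ∧
      (((j : ℕ) = 0 ∧ x ∈ B) ∨ ((j : ℕ) ≠ 0 ∧ x ∈ C)) ∧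
      (∀ u, T.Adj u (Sum.inr (some j)) → u = Sum.inl x) ∧
      ∀ w, ¬ T.Adj (Sum.inr (some j)) w := by
  have hmem : (Sum.inr (some j) : V ⊕ Option (Fin (k-1))) ∈ T.verts :=
    hT.2.1 ⟨some j, rfl⟩
  obtain ⟨u, hu, huniq⟩ := hT.1.2.2.1 _ hmem (by simp)
  have hinset : {w | T.Adj w (Sum.inr (some j))} = {u} := by
    ext w; simp only [Set.mem_setOf_eq, Set.mem_singleton_iff]
    exact ⟨fun h => huniq w h, fun h => h ▸ hu⟩
  have hdeg := hT.2.2 (Sum.inr (some j)) ⟨some j, rfl⟩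
  rw [Sub.deg, hinset, Set.ncard_singleton] at hdeg
  have hout : {w | T.Adj (Sum.inr (some j)) w} = ∅ :=
    (Set.ncard_eq_zero (Set.toFinite _)).mp (by omega)
  have hnout : ∀ w, ¬ T.Adj (Sum.inr (some j)) w := by
    intro w hw; have := Set.ext_iff.mp hout w; simpa using this.mp hw
  have hD := T.adj_sub hu
  match u, hu, hD with
  | Sum.inl x, hu, hD => exact ⟨x, hu, hD, fun w hw => huniq w hw, hnout⟩
  | Sum.inr none, hu, hD => exact hD.elim
  | Sum.inr (some i), hu, hD => exact hD.elim

/-- In a connected induced subgraph, every vertex (other than a sole vertex) has a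
neighbor inside the set. -/
lemma exists_adj_of_connected {s : Set V} (hc : (G.induce s).Connected)
    {x y : V} (hx : x ∈ s) (hy : y ∈ s) (hxy : x ≠ y) :
    ∃ z ∈ s, G.Adj x z := by
  obtain ⟨w⟩ := hc.preconnected ⟨x, hx⟩ ⟨y, hy⟩
  match w with
  | SimpleGraph.Walk.nil => exact absurd rfl hxy
  | SimpleGraph.Walk.cons (v := z) h p => exact ⟨z.1, z.2, by simpa using h⟩

end Helpers

section Construction

variable {V : Type*} {k : ℕ} {G : SimpleGraph V} {A B C : Set V}

/-- The pendant tree on `{r, s₁, …} ∪ {a, b, c}` with arcs `r→a`, `pb→b`, `pc→c`,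
`b→s₁` and `c→s_j` for `j ≥ 2`. -/
def pTree (a b c pb pc : V) (ha : a ∈ A) (hb : b ∈ B) (hc : c ∈ C)
    (hpb : G.Adj pb b) (hpc : G.Adj pc c)
    (hpb' : pb = a ∨ pb = c) (hpc' : pc = a ∨ pc = b) : (triD G A B C k).Sub where
  verts := Set.range Sum.inr ∪ {Sum.inl a, Sum.inl b, Sum.inl c}
  Adj u v := (u = Sum.inr none ∧ v = Sum.inl a) ∨ (u = Sum.inl pb ∧ v = Sum.inl b) ∨
    (u = Sum.inl pc ∧ v = Sum.inl c) ∨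
    (∃ j : Fin (k - 1), (j : ℕ) = 0 ∧ u = Sum.inl b ∧ v = Sum.inr (some j)) ∨
    (∃ j : Fin (k - 1), (j : ℕ) ≠ 0 ∧ u = Sum.inl c ∧ v = Sum.inr (some j))
  adj_sub := by
    rintro u v (⟨rfl, rfl⟩ | ⟨rfl, rfl⟩ | ⟨rfl, rfl⟩ | ⟨j, hj, rfl, rfl⟩ | ⟨j, hj, rfl, rfl⟩)
    · exact ha
    · exact hpb
    · exact hpc
    · exact Or.inl ⟨hj, hb⟩
    · exact Or.inr ⟨hj, hc⟩
  mem_left := by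
    rintro u v (⟨rfl, rfl⟩ | ⟨rfl, rfl⟩ | ⟨rfl, rfl⟩ | ⟨j, hj, rfl, rfl⟩ | ⟨j, hj, rfl, rfl⟩)
    · exact Or.inl ⟨none, rfl⟩
    · rcases hpb' with rfl | rfl <;> simp
    · rcases hpc' with rfl | rfl <;> simp
    · simp
    · simp
  mem_right := by
    rintro u v (⟨rfl, rfl⟩ | ⟨rfl, rfl⟩ | ⟨rfl, rfl⟩ | ⟨j, hj, rfl, rfl⟩ | ⟨j, hj, rfl, rfl⟩)
    · simp
    · simp
    · simp
    · exact Or.inl ⟨some j, rfl⟩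
    · exact Or.inl ⟨some j, rfl⟩

lemma pTree_pendant (a b c pb pc : V) (ha : a ∈ A) (hb : b ∈ B) (hc : c ∈ C)
    (hpb : G.Adj pb b) (hpc : G.Adj pc c)
    (hpb' : pb = a ∨ pb = c) (hpc' : pc = a ∨ pc = b)
    (hab : a ≠ b) (hac : a ≠ c) (hbc : b ≠ c)
    (hnbad : ¬ (pb = c ∧ pc = b)) :
    (triD G A B C k).IsPendantTree (Set.range Sum.inr) (Sum.inr none)
      (pTree a b c pb pc ha hb hc hpb hpc hpb' hpc') := by
  let T : (triD G A B C k).Sub := pTree a b c pb pc ha hb hc hpb hpc hpb' hpc'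
  show (triD G A B C k).IsPendantTree (Set.range Sum.inr) (Sum.inr none) T
  -- reachability pieces
  have hra : T.Adj (Sum.inr none) (Sum.inl a) := Or.inl ⟨rfl, rfl⟩
  have hreachb : Relation.ReflTransGen T.Adj (Sum.inr none) (Sum.inl b) := by
    rcases hpb' with rfl | rfl
    · exact Relation.ReflTransGen.head hra
        (Relation.ReflTransGen.single (Or.inr (Or.inl ⟨rfl, rfl⟩)))
    · -- pb = c, so pc = a
      have hpca : pc = a := by
        rcases hpc' with h | h
        · exact h
        · exact absurd ⟨rfl, h⟩ hnbad
      subst hpca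
      exact Relation.ReflTransGen.head hra (Relation.ReflTransGen.head
        (Or.inr (Or.inr (Or.inl ⟨rfl, rfl⟩)))
        (Relation.ReflTransGen.single (Or.inr (Or.inl ⟨rfl, rfl⟩))))
  have hreachc : Relation.ReflTransGen T.Adj (Sum.inr none) (Sum.inl c) := by
    rcases hpc' with rfl | rfl
    · exact Relation.ReflTransGen.head hra
        (Relation.ReflTransGen.single (Or.inr (Or.inr (Or.inl ⟨rfl, rfl⟩))))
    · -- pc = b, so pb = a
      have hpba : pb = a := by
        rcases hpb' with h | h
        · exact h
        · exact absurd ⟨h, rfl⟩ hnbad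
      subst hpba
      exact Relation.ReflTransGen.head hra (Relation.ReflTransGen.head
        (Or.inr (Or.inl ⟨rfl, rfl⟩))
        (Relation.ReflTransGen.single (Or.inr (Or.inr (Or.inl ⟨rfl, rfl⟩)))))
  refine ⟨⟨Or.inl ⟨none, rfl⟩, ?_, ?_, ?_⟩, fun w hw => Or.inl hw, ?_⟩
  · -- no arc into the root
    rintro w (⟨rfl, h⟩ | ⟨rfl, h⟩ | ⟨rfl, h⟩ | ⟨j, hj, rfl, h⟩ | ⟨j, hj, rfl, h⟩) <;> simp_all
  · -- unique in-arc for each non-root vertex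
    rintro v (⟨o, rfl⟩ | rfl | rfl | rfl) hvr
    · -- v = inr o, o ≠ none
      match o, hvr with
      | some j, _ =>
        by_cases hj0 : (j : ℕ) = 0
        · refine ⟨Sum.inl b, Or.inr (Or.inr (Or.inr (Or.inl ⟨j, hj0, rfl, rfl⟩))), ?_⟩
          rintro u (⟨rfl, h⟩ | ⟨rfl, h⟩ | ⟨rfl, h⟩ | ⟨j', hj', rfl, h⟩ | ⟨j', hj', rfl, h⟩) <;>
            simp_all
        · refine ⟨Sum.inl c, Or.inr (Or.inr (Or.inr (Or.inr ⟨j, hj0, rfl, rfl⟩))), ?_⟩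
          rintro u (⟨rfl, h⟩ | ⟨rfl, h⟩ | ⟨rfl, h⟩ | ⟨j', hj', rfl, h⟩ | ⟨j', hj', rfl, h⟩) <;>
            simp_all
    · refine ⟨Sum.inr none, Or.inl ⟨rfl, rfl⟩, ?_⟩
      rintro u (⟨rfl, h⟩ | ⟨rfl, h⟩ | ⟨rfl, h⟩ | ⟨j', hj', rfl, h⟩ | ⟨j', hj', rfl, h⟩) <;>
        simp_all
    · refine ⟨Sum.inl pb, Or.inr (Or.inl ⟨rfl, rfl⟩), ?_⟩
      rintro u (⟨rfl, h⟩ | ⟨rfl, h⟩ | ⟨rfl, h⟩ | ⟨j', hj', rfl, h⟩ | ⟨j', hj', rfl, h⟩) <;>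
        simp_all
    · refine ⟨Sum.inl pc, Or.inr (Or.inr (Or.inl ⟨rfl, rfl⟩)), ?_⟩
      rintro u (⟨rfl, h⟩ | ⟨rfl, h⟩ | ⟨rfl, h⟩ | ⟨j', hj', rfl, h⟩ | ⟨j', hj', rfl, h⟩) <;>
        simp_all
  · -- reachability
    rintro v (⟨o, rfl⟩ | rfl | rfl | rfl)
    · match o with
      | none => exact Relation.ReflTransGen.refl
      | some j =>
        by_cases hj0 : (j : ℕ) = 0
        · exact hreachb.tail (Or.inr (Or.inr (Or.inr (Or.inl ⟨j, hj0, rfl, rfl⟩))))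
        · exact hreachc.tail (Or.inr (Or.inr (Or.inr (Or.inr ⟨j, hj0, rfl, rfl⟩))))
    · exact Relation.ReflTransGen.single hra
    · exact hreachb
    · exact hreachc
  · -- degrees of vertices in S
    rintro s ⟨o, rfl⟩
    match o with
    | none =>
      have hout : {w | T.Adj (Sum.inr none) w} = {Sum.inl a} := by
        ext w
        simp only [Set.mem_setOf_eq, Set.mem_singleton_iff]
        constructor
        · rintro (⟨h, rfl⟩ | ⟨h, rfl⟩ | ⟨h, rfl⟩ | ⟨j', hj', h, rfl⟩ | ⟨j', hj', h, rfl⟩) <;>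
            simp_all
        · rintro rfl; exact Or.inl ⟨rfl, rfl⟩
      have hin : {w | T.Adj w (Sum.inr none)} = ∅ := by
        ext w
        simp only [Set.mem_setOf_eq, Set.mem_empty_iff_false, iff_false]
        rintro (⟨h, h'⟩ | ⟨h, h'⟩ | ⟨h, h'⟩ | ⟨j', hj', h, h'⟩ | ⟨j', hj', h, h'⟩) <;> simp_all
      rw [Dgraph.Sub.deg, hout, hin, Set.ncard_singleton, Set.ncard_empty]
    | some j =>
      have hout : {w | T.Adj (Sum.inr (some j)) w} = ∅ := by
        ext w
        simp only [Set.mem_setOf_eq, Set.mem_empty_iff_false, iff_false]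
        rintro (⟨h, h'⟩ | ⟨h, h'⟩ | ⟨h, h'⟩ | ⟨j', hj', h, h'⟩ | ⟨j', hj', h, h'⟩) <;> simp_all
      by_cases hj0 : (j : ℕ) = 0
      · have hin : {w | T.Adj w (Sum.inr (some j))} = {Sum.inl b} := by
          ext w
          simp only [Set.mem_setOf_eq, Set.mem_singleton_iff]
          constructor
          · rintro (⟨rfl, h⟩ | ⟨rfl, h⟩ | ⟨rfl, h⟩ | ⟨j', hj', rfl, h⟩ | ⟨j', hj', rfl, h⟩) <;>
              simp_all
          · rintro rfl; exact Or.inr (Or.inr (Or.inr (Or.inl ⟨j, hj0, rfl, rfl⟩)))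
        rw [Dgraph.Sub.deg, hout, hin, Set.ncard_singleton, Set.ncard_empty]
      · have hin : {w | T.Adj w (Sum.inr (some j))} = {Sum.inl c} := by
          ext w
          simp only [Set.mem_setOf_eq, Set.mem_singleton_iff]
          constructor
          · rintro (⟨rfl, h⟩ | ⟨rfl, h⟩ | ⟨rfl, h⟩ | ⟨j', hj', rfl, h⟩ | ⟨j', hj', rfl, h⟩) <;>
              simp_all
          · rintro rfl; exact Or.inr (Or.inr (Or.inr (Or.inr ⟨j, hj0, rfl, rfl⟩)))
        rw [Dgraph.Sub.deg, hout, hin, Set.ncard_singleton, Set.ncard_empty]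

end Construction

section Bound

variable {V : Type*} [Fintype V] {k : ℕ} {G : SimpleGraph V} {A B C : Set V}

lemma tree_family_le {ℓ m : ℕ} (hA : A.ncard = ℓ)
    (f : Fin m → (triD G A B C k).Sub)
    (hp : ∀ i, (triD G A B C k).IsPendantTree (Set.range Sum.inr) (Sum.inr none) (f i))
    (hd : ∀ i j, i ≠ j →
      (triD G A B C k).InternallyDisjoint (Set.range Sum.inr) (f i) (f j)) :
    m ≤ ℓ := by
  classical
  choose a haA harc _ using fun i => tree_root_arc (f i) (hp i)
  have hinj : Function.Injective a := by
    intro i j hij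
    by_contra hne
    have h1 : Sum.inl (a i) ∈ (f i).verts := (f i).mem_right (harc i)
    have h2 : Sum.inl (a i) ∈ (f j).verts := hij ▸ (f j).mem_right (harc j)
    have := (hd i j hne).2 ▸ (Set.mem_inter h1 h2)
    obtain ⟨o, ho⟩ := this
    simp at ho
  haveI : Fintype ↥A := Fintype.ofFinite ↥A
  have hcard : Fintype.card ↥A = ℓ := by
    rw [← Nat.card_eq_fintype_card, Nat.card_coe_set_eq, hA]
  calc m = Fintype.card (Fin m) := (Fintype.card_fin m).symm
    _ ≤ Fintype.card ↥A := Fintype.card_le_of_injective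
        (fun i => ⟨a i, haA i⟩) (fun i j h => hinj (congrArg Subtype.val h))
    _ = ℓ := hcard

end Bound

section AdjInl

variable {V : Type*} {k : ℕ} {G : SimpleGraph V} {A B C : Set V}

lemma pTree_adj_inl {a b c pb pc : V} {ha : a ∈ A} {hb : b ∈ B} {hc : c ∈ C}
    {hpb : G.Adj pb b} {hpc : G.Adj pc c}
    {hpb' : pb = a ∨ pb = c} {hpc' : pc = a ∨ pc = b}
    {u v : V ⊕ Option (Fin (k - 1))}
    (h : (pTree a b c pb pc ha hb hc hpb hpc hpb' hpc').Adj u v) :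
    ∃ x, (u = Sum.inl x ∨ v = Sum.inl x) ∧ (x = a ∨ x = b ∨ x = c) := by
  rcases h with ⟨rfl, rfl⟩ | ⟨rfl, rfl⟩ | ⟨rfl, rfl⟩ | ⟨j, hj, rfl, rfl⟩ | ⟨j, hj, rfl, rfl⟩
  · exact ⟨a, Or.inr rfl, Or.inl rfl⟩
  · exact ⟨b, Or.inr rfl, Or.inr (Or.inl rfl)⟩
  · exact ⟨c, Or.inr rfl, Or.inr (Or.inr rfl)⟩
  · exact ⟨b, Or.inl rfl, Or.inr (Or.inl rfl)⟩
  · exact ⟨c, Or.inl rfl, Or.inr (Or.inr rfl)⟩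

lemma pTree_adj_inl_mem {a b c pb pc : V} {ha : a ∈ A} {hb : b ∈ B} {hc : c ∈ C}
    {hpb : G.Adj pb b} {hpc : G.Adj pc c}
    {hpb' : pb = a ∨ pb = c} {hpc' : pc = a ∨ pc = b}
    {u v : V ⊕ Option (Fin (k - 1))}
    (h : (pTree a b c pb pc ha hb hc hpb hpc hpb' hpc').Adj u v)
    (x : V) (hx : u = Sum.inl x ∨ v = Sum.inl x) : x = a ∨ x = b ∨ x = c := by
  rcases h with ⟨rfl, rfl⟩ | ⟨rfl, rfl⟩ | ⟨rfl, rfl⟩ | ⟨j, hj, rfl, rfl⟩ | ⟨j, hj, rfl, rfl⟩ <;>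
    rcases hx with hx | hx <;>
    first
    | (cases hx; first
        | exact Or.inl rfl
        | exact Or.inr (Or.inl rfl)
        | exact Or.inr (Or.inr rfl)
        | (rcases hpb' with rfl | rfl
           · exact Or.inl rfl
           · exact Or.inr (Or.inr rfl))
        | (rcases hpc' with rfl | rfl
           · exact Or.inl rfl
           · exact Or.inr (Or.inl rfl)))
    | simp at hx

end AdjInl

/-- Theorem 2.4 (key equivalence): for a tripartite graph `G` with 3-partition `(A, B, C)`,
`|A| = |B| = |C| = ℓ`, and the constructed symmetric digraph `D` with terminal set
`S = {r, s₁, …, s_{k-1}}` rooted at `r`, we have `τ_{S,r}(D) ≥ ℓ` iff `V(G)` can be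
partitioned into `ℓ` triples, each containing exactly one vertex of each of `A`, `B`, `C`
and inducing a connected subgraph of `G`. -/
theorem tri_tauSr_iff_CLLM {V : Type*} [Fintype V] {k ℓ : ℕ}
    (hk3 : 3 ≤ k) (hl2 : 2 ≤ ℓ) (G : SimpleGraph V) (A B C : Set V)
    (hAB : Disjoint A B) (hAC : Disjoint A C) (hBC : Disjoint B C)
    (hcover : A ∪ B ∪ C = Set.univ)
    (hA : A.ncard = ℓ) (hB : B.ncard = ℓ) (hC : C.ncard = ℓ)
    (hindepA : ∀ x ∈ A, ∀ y ∈ A, ¬ G.Adj x y)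
    (hindepB : ∀ x ∈ B, ∀ y ∈ B, ¬ G.Adj x y)
    (hindepC : ∀ x ∈ C, ∀ y ∈ C, ¬ G.Adj x y) :
    ℓ ≤ (triD G A B C k).tauSr (Set.range Sum.inr) (Sum.inr none) ↔
      ∃ f : V → Fin ℓ,
        (∀ i, ∃! a, a ∈ A ∧ f a = i) ∧
        (∀ i, ∃! b, b ∈ B ∧ f b = i) ∧
        (∀ i, ∃! c, c ∈ C ∧ f c = i) ∧
        ∀ i, (G.induce {v | f v = i}).Connected := by
  classical
  set D := triD G A B C k with hD
  set S : Set (V ⊕ Option (Fin (k - 1))) := Set.range Sum.inr with hS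
  set M : Set ℕ := {m : ℕ | ∃ f : Fin m → D.Sub,
    (∀ i, D.IsPendantTree S (Sum.inr none) (f i)) ∧
    ∀ i j, i ≠ j → D.InternallyDisjoint S (f i) (f j)} with hM
  have htau : D.tauSr S (Sum.inr none) = sSup M := rfl
  have hbdd : ∀ m ∈ M, m ≤ ℓ := by
    rintro m ⟨f, hp, hd⟩
    exact tree_family_le hA f hp hd
  have hbddA : BddAbove M := ⟨ℓ, fun m hm => hbdd m hm⟩
  rw [htau]
  constructor
  · -- forward direction
    intro h
    have hM0 : (0 : ℕ) ∈ M := ⟨Fin.elim0, fun i => i.elim0, fun i j _ => i.elim0⟩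
    have hmem := Nat.sSup_mem ⟨0, hM0⟩ hbddA
    have hml : sSup M = ℓ := le_antisymm (hbdd _ hmem) h
    obtain ⟨f0, hp0, hd0⟩ := hmem
    set f : Fin ℓ → D.Sub := fun i => f0 (Fin.cast hml.symm i) with hf
    have hp : ∀ i, D.IsPendantTree S (Sum.inr none) (f i) := fun i => hp0 _
    have hd : ∀ i j, i ≠ j → D.InternallyDisjoint S (f i) (f j) := by
      intro i j hij
      exact hd0 _ _ (fun hc => hij (by simpa [Fin.ext_iff] using hc))
    clear hd0 hp0 hf
    -- extract a, b, c
    choose a haA haarc hauniq using fun i => tree_root_arc (f i) (hp i)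
    have h0k : 0 < k - 1 := by omega
    have h1k : 1 < k - 1 := by omega
    choose b hbarc hbprop hbuniq hbout using fun i => tree_s_arc (⟨0, h0k⟩ : Fin (k-1)) (f i) (hp i)
    choose c hcarc hcprop hcuniq hcout using fun i => tree_s_arc (⟨1, h1k⟩ : Fin (k-1)) (f i) (hp i)
    have hbB : ∀ i, b i ∈ B := by
      intro i; rcases hbprop i with ⟨_, h⟩ | ⟨h0, _⟩
      · exact h
      · exact absurd rfl h0
    have hcC : ∀ i, c i ∈ C := by
      intro i; rcases hcprop i with ⟨h0, _⟩ | ⟨_, h⟩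
      · exact absurd h0 one_ne_zero
      · exact h
    -- membership of a b c in the trees
    have haU : ∀ i, Sum.inl (a i) ∈ (f i).verts := fun i => (f i).mem_right (haarc i)
    have hbU : ∀ i, Sum.inl (b i) ∈ (f i).verts := fun i => (f i).mem_left (hbarc i)
    have hcU : ∀ i, Sum.inl (c i) ∈ (f i).verts := fun i => (f i).mem_left (hcarc i)
    -- distinctness
    have hab : ∀ i, a i ≠ b i := fun i h =>
      Set.disjoint_left.mp hAB (haA i) (h ▸ hbB i)
    have hac : ∀ i, a i ≠ c i := fun i h =>
      Set.disjoint_left.mp hAC (haA i) (h ▸ hcC i)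
    have hbc : ∀ i, b i ≠ c i := fun i h =>
      Set.disjoint_left.mp hBC (hbB i) (h ▸ hcC i)
    -- disjointness of the V-parts of the trees
    have hverts : ∀ i j, i ≠ j → ∀ v : V,
        Sum.inl v ∈ (f i).verts → Sum.inl v ∈ (f j).verts → False := by
      intro i j hij v h1 h2
      have := (hd i j hij).2 ▸ Set.mem_inter h1 h2
      obtain ⟨o, ho⟩ := this
      simp at ho
    -- counting: each tree has exactly the three vertices a i, b i, c i in V
    set U : Fin ℓ → Finset V :=
      fun i => Finset.univ.filter (fun v => Sum.inl v ∈ (f i).verts) with hU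
    have hUmem' : ∀ i v, v ∈ U i ↔ Sum.inl v ∈ (f i).verts := by
      intro i v; simp [hU]
    have hdisjU : ∀ i ∈ Finset.univ, ∀ j ∈ Finset.univ, i ≠ j →
        Disjoint (U i) (U j) := by
      intro i _ j _ hij
      rw [Finset.disjoint_left]
      intro v hvi hvj
      exact hverts i j hij v ((hUmem' i v).mp hvi) ((hUmem' j v).mp hvj)
    have hsubU : ∀ i, ({a i, b i, c i} : Finset V) ⊆ U i := by
      intro i v hv
      rw [hUmem']
      rcases Finset.mem_insert.mp hv with rfl | hv
      · exact haU i
      rcases Finset.mem_insert.mp hv with rfl | hv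
      · exact hbU i
      rw [Finset.mem_singleton.mp hv]
      exact hcU i
    have hcard3 : ∀ i, ({a i, b i, c i} : Finset V).card = 3 := by
      intro i
      rw [Finset.card_insert_of_notMem (by simp [hab i, hac i]),
        Finset.card_insert_of_notMem (by simp [hbc i]), Finset.card_singleton]
    have hcardV : Fintype.card V = 3 * ℓ := by
      have h1 : Disjoint (A ∪ B) C := Set.disjoint_union_left.mpr ⟨hAC, hBC⟩
      have h2 : (Set.univ : Set V).ncard = 3 * ℓ := by
        rw [← hcover, Set.ncard_union_eq h1, Set.ncard_union_eq hAB, hA, hB, hC]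
        ring
      rw [← Nat.card_eq_fintype_card, ← Set.ncard_univ, h2]
    have hsum : ∑ i, (U i).card ≤ 3 * ℓ := by
      rw [← Finset.card_biUnion hdisjU, ← hcardV, ← Finset.card_univ]
      exact Finset.card_le_card (Finset.subset_univ _)
    have h3le : ∀ i, 3 ≤ (U i).card := fun i =>
      hcard3 i ▸ Finset.card_le_card (hsubU i)
    have heach : ∀ i, (U i).card = 3 := by
      by_contra hcon
      push_neg at hcon
      obtain ⟨i, hi⟩ := hcon
      have hlt : ∑ _j : Fin ℓ, 3 < ∑ j, (U j).card :=
        Finset.sum_lt_sum (fun j _ => h3le j)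
          ⟨i, Finset.mem_univ i, lt_of_le_of_ne (h3le i) (Ne.symm hi)⟩
      rw [Finset.sum_const, Finset.card_univ, Fintype.card_fin, smul_eq_mul] at hlt
      omega
    have hUeq : ∀ i, U i = {a i, b i, c i} := fun i =>
      (Finset.eq_of_subset_of_card_le (hsubU i)
        (le_of_eq (by rw [heach i, hcard3 i]))).symm
    have hUmem : ∀ i v, Sum.inl v ∈ (f i).verts ↔ (v = a i ∨ v = b i ∨ v = c i) := by
      intro i v
      rw [← hUmem' i v, hUeq i]
      simp
    -- surjectivity of a, b, c onto A, B, C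
    have hinj : ∀ (x : Fin ℓ → V), (∀ i, Sum.inl (x i) ∈ (f i).verts) →
        Function.Injective x := by
      intro x hx i j hij
      by_contra hne
      exact hverts i j hne (x i) (hx i) (hij ▸ hx j)
    have hsurj : ∀ (x : Fin ℓ → V) (P : Set V), (∀ i, x i ∈ P) → P.ncard = ℓ →
        (∀ i, Sum.inl (x i) ∈ (f i).verts) → ∀ v ∈ P, ∃ i, x i = v := by
      intro x P hxP hP hx v hv
      haveI : Fintype ↥P := Fintype.ofFinite ↥P
      have hcard : Fintype.card ↥P = ℓ := by
        rw [← Nat.card_eq_fintype_card, Nat.card_coe_set_eq, hP]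
      have hbij : Function.Bijective (fun i => (⟨x i, hxP i⟩ : ↥P)) := by
        rw [Fintype.bijective_iff_injective_and_card]
        exact ⟨fun i j h => hinj x hx (congrArg Subtype.val h), by simp [hcard]⟩
      obtain ⟨i, hi⟩ := hbij.2 ⟨v, hv⟩
      exact ⟨i, congrArg Subtype.val hi⟩
    have hcov : ∀ v : V, ∃ i, v = a i ∨ v = b i ∨ v = c i := by
      intro v
      have hv : v ∈ A ∪ B ∪ C := hcover ▸ Set.mem_univ v
      rcases hv with (hv | hv) | hv
      · obtain ⟨i, hi⟩ := hsurj a A haA hA haU v hv; exact ⟨i, Or.inl hi.symm⟩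
      · obtain ⟨i, hi⟩ := hsurj b B hbB hB hbU v hv; exact ⟨i, Or.inr (Or.inl hi.symm)⟩
      · obtain ⟨i, hi⟩ := hsurj c C hcC hC hcU v hv; exact ⟨i, Or.inr (Or.inr hi.symm)⟩
    set g : V → Fin ℓ := fun v => (hcov v).choose with hgdef
    have hg : ∀ v, v = a (g v) ∨ v = b (g v) ∨ v = c (g v) := fun v => (hcov v).choose_spec
    have hdet : ∀ v i, (v = a i ∨ v = b i ∨ v = c i) → g v = i := by
      intro v i hvi
      by_contra hne
      have hv1 : Sum.inl v ∈ (f (g v)).verts := (hUmem (g v) v).mpr (hg v)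
      have hv2 : Sum.inl v ∈ (f i).verts := (hUmem i v).mpr hvi
      exact hverts (g v) i hne v hv1 hv2
    have hga : ∀ i, g (a i) = i := fun i => hdet _ i (Or.inl rfl)
    have hgb : ∀ i, g (b i) = i := fun i => hdet _ i (Or.inr (Or.inl rfl))
    have hgc : ∀ i, g (c i) = i := fun i => hdet _ i (Or.inr (Or.inr rfl))
    refine ⟨g, ?_, ?_, ?_, ?_⟩
    · intro i
      refine ⟨a i, ⟨haA i, hga i⟩, ?_⟩
      rintro y ⟨hyA, hyg⟩
      rcases hg y with hy | hy | hy
      · rw [hy, hyg]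
      · exact absurd (hy ▸ hyA) (Set.disjoint_right.mp hAB (hyg ▸ hbB (g y)))
      · exact absurd (hy ▸ hyA) (Set.disjoint_right.mp hAC (hyg ▸ hcC (g y)))
    · intro i
      refine ⟨b i, ⟨hbB i, hgb i⟩, ?_⟩
      rintro y ⟨hyB, hyg⟩
      rcases hg y with hy | hy | hy
      · exact absurd (hy ▸ hyB) (Set.disjoint_left.mp hAB (hyg ▸ haA (g y)))
      · rw [hy, hyg]
      · exact absurd (hy ▸ hyB) (Set.disjoint_right.mp hBC (hyg ▸ hcC (g y)))
    · intro i
      refine ⟨c i, ⟨hcC i, hgc i⟩, ?_⟩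
      rintro y ⟨hyC, hyg⟩
      rcases hg y with hy | hy | hy
      · exact absurd (hy ▸ hyC) (Set.disjoint_left.mp hAC (hyg ▸ haA (g y)))
      · exact absurd (hy ▸ hyC) (Set.disjoint_left.mp hBC (hyg ▸ hbB (g y)))
      · rw [hy, hyg]
    · -- connectivity
      intro i
      have hseteq : {v | g v = i} = {v : V | Sum.inl v ∈ (f i).verts} := by
        ext v
        simp only [Set.mem_setOf_eq, hUmem i v]
        exact ⟨fun hv => hv ▸ hg v, fun hv => hdet v i hv⟩
      rw [hseteq]
      set U' : Set V := {v : V | Sum.inl v ∈ (f i).verts} with hU'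
      have haU' : a i ∈ U' := haU i
      have hnoout : ∀ (j : Fin (k-1)) w, ¬ (f i).Adj (Sum.inr (some j)) w := by
        intro j
        obtain ⟨_, _, _, _, h⟩ := tree_s_arc j (f i) (hp i)
        exact h
      have hkey : ∀ w, Relation.ReflTransGen (f i).Adj (Sum.inr none) w →
          ∀ v, w = Sum.inl v → ∃ hv : v ∈ U',
            (G.induce U').Reachable ⟨a i, haU'⟩ ⟨v, hv⟩ := by
        intro w hw
        induction hw with
        | refl => intro v hv; simp at hv
        | @tail w' w'' hw' hadj ih =>
          intro v hv
          subst hv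
          match w', hadj with
          | Sum.inr none, hadj =>
            have hva := hauniq i _ hadj
            have : v = a i := by injection hva
            subst this
            exact ⟨haU', SimpleGraph.Reachable.refl _⟩
          | Sum.inr (some j), hadj => exact absurd hadj (hnoout j _)
          | Sum.inl u, hadj =>
            obtain ⟨hu, hr⟩ := ih u rfl
            have hGa : G.Adj u v := (f i).adj_sub hadj
            have hvU : v ∈ U' := (f i).mem_right hadj
            refine ⟨hvU, hr.trans (SimpleGraph.Adj.reachable ?_)⟩
            exact hGa
      have hrch : ∀ x : ↥U', (G.induce U').Reachable ⟨a i, haU'⟩ x := by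
        intro x
        have hx : Sum.inl x.1 ∈ (f i).verts := x.2
        have hrt := (hp i).1.2.2.2 _ hx
        obtain ⟨hv, hr⟩ := hkey _ hrt x.1 rfl
        exact hr
      haveI : Nonempty ↥U' := ⟨⟨a i, haU'⟩⟩
      exact ⟨fun x y => (hrch x).symm.trans (hrch y)⟩
  · -- backward direction: construction
    rintro ⟨g, hg1, hg2, hg3, hg4⟩
    choose a haspec using fun i => (hg1 i).exists
    choose b hbspec using fun i => (hg2 i).exists
    choose c hcspec using fun i => (hg3 i).exists
    have haA : ∀ i, a i ∈ A := fun i => (haspec i).1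
    have hbB : ∀ i, b i ∈ B := fun i => (hbspec i).1
    have hcC : ∀ i, c i ∈ C := fun i => (hcspec i).1
    have hga : ∀ i, g (a i) = i := fun i => (haspec i).2
    have hgb : ∀ i, g (b i) = i := fun i => (hbspec i).2
    have hgc : ∀ i, g (c i) = i := fun i => (hcspec i).2
    have hab : ∀ i, a i ≠ b i := fun i h =>
      Set.disjoint_left.mp hAB (haA i) (h ▸ hbB i)
    have hac : ∀ i, a i ≠ c i := fun i h =>
      Set.disjoint_left.mp hAC (haA i) (h ▸ hcC i)
    have hbc : ∀ i, b i ≠ c i := fun i h =>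
      Set.disjoint_left.mp hBC (hbB i) (h ▸ hcC i)
    have htrip : ∀ i z, g z = i → z = a i ∨ z = b i ∨ z = c i := by
      intro i z hz
      have hzmem : z ∈ A ∪ B ∪ C := hcover ▸ Set.mem_univ z
      rcases hzmem with (hzm | hzm) | hzm
      · exact Or.inl ((hg1 i).unique ⟨hzm, hz⟩ ⟨haA i, hga i⟩)
      · exact Or.inr (Or.inl ((hg2 i).unique ⟨hzm, hz⟩ ⟨hbB i, hgb i⟩))
      · exact Or.inr (Or.inr ((hg3 i).unique ⟨hzm, hz⟩ ⟨hcC i, hgc i⟩))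
    -- neighbour facts from connectivity
    have hnb : ∀ i (x y : V), g x = i → g y = i → x ≠ y →
        ∃ z, g z = i ∧ G.Adj x z := by
      intro i x y hx hy hxy
      obtain ⟨z, hz, hadj⟩ := exists_adj_of_connected (hg4 i) hx hy hxy
      exact ⟨z, hz, hadj⟩
    have hTex : ∀ i, ∃ pb pc, G.Adj pb (b i) ∧ G.Adj pc (c i) ∧
        (pb = a i ∨ pb = c i) ∧ (pc = a i ∨ pc = b i) ∧ ¬ (pb = c i ∧ pc = b i) := by
      intro i
      by_cases hab' : G.Adj (a i) (b i)
      · by_cases hac' : G.Adj (a i) (c i)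
        · exact ⟨a i, a i, hab', hac', Or.inl rfl, Or.inl rfl,
            fun h => hac i h.1⟩
        · -- a~b but not a~c; c must have a neighbour, necessarily b
          obtain ⟨z, hz, hadj⟩ := hnb i (c i) (a i) (hgc i) (hga i) (Ne.symm (hac i))
          rcases htrip i z hz with rfl | rfl | rfl
          · exact absurd hadj.symm hac'
          · exact ⟨a i, b i, hab', hadj.symm, Or.inl rfl, Or.inr rfl,
              fun h => hac i h.1⟩
          · exact absurd hadj (G.loopless.irrefl _)
      · -- not a~b; a must be adjacent to c, and b must be adjacent to c
        obtain ⟨z, hz, hadj⟩ := hnb i (a i) (b i) (hga i) (hgb i) (hab i)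
        rcases htrip i z hz with rfl | rfl | rfl
        · exact absurd hadj (G.loopless.irrefl _)
        · exact absurd hadj hab'
        · obtain ⟨w, hw, hadjb⟩ := hnb i (b i) (a i) (hgb i) (hga i) (Ne.symm (hab i))
          rcases htrip i w hw with rfl | rfl | rfl
          · exact absurd hadjb.symm hab'
          · exact absurd hadjb (G.loopless.irrefl _)
          · exact ⟨c i, a i, hadjb.symm, hadj, Or.inr rfl, Or.inl rfl,
              fun h => hab i h.2⟩
    choose pb pc hpb hpc hpb' hpc' hnbad using hTex
    set F : Fin ℓ → D.Sub := fun i =>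
      pTree (a i) (b i) (c i) (pb i) (pc i) (haA i) (hbB i) (hcC i)
        (hpb i) (hpc i) (hpb' i) (hpc' i) with hF
    have hp : ∀ i, D.IsPendantTree S (Sum.inr none) (F i) := by
      intro i
      exact pTree_pendant _ _ _ _ _ (haA i) (hbB i) (hcC i) (hpb i) (hpc i)
        (hpb' i) (hpc' i) (hab i) (hac i) (hbc i) (hnbad i)
    have hgmem : ∀ i x, (x = a i ∨ x = b i ∨ x = c i) → g x = i := by
      rintro i x (rfl | rfl | rfl)
      · exact hga i
      · exact hgb i
      · exact hgc i
    have hd : ∀ i j, i ≠ j → D.InternallyDisjoint S (F i) (F j) := by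
      intro i j hij
      constructor
      · rintro u v ⟨h1, h2⟩
        obtain ⟨x, hx, hxi⟩ := pTree_adj_inl h1
        have hxj := pTree_adj_inl_mem h2 x hx
        exact hij ((hgmem i x hxi).symm.trans (hgmem j x hxj))
      · have hget : ∀ (j' : Fin ℓ) (w : V ⊕ Option (Fin (k - 1))),
            w ∈ ({Sum.inl (a j'), Sum.inl (b j'), Sum.inl (c j')} :
              Set (V ⊕ Option (Fin (k - 1)))) → ∃ x, w = Sum.inl x ∧ g x = j' := by
          intro j' w hw
          rcases hw with rfl | rfl | rfl
          · exact ⟨a j', rfl, hga j'⟩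
          · exact ⟨b j', rfl, hgb j'⟩
          · exact ⟨c j', rfl, hgc j'⟩
        ext w
        constructor
        · rintro ⟨hw1, hw2⟩
          rcases hw1 with hw1 | hw1
          · exact hw1
          · exfalso
            obtain ⟨x, rfl, hgx⟩ := hget i w hw1
            rcases hw2 with hw2 | hw2
            · obtain ⟨o, ho⟩ := hw2
              simp at ho
            · obtain ⟨y, hxy, hgy⟩ := hget j _ hw2
              have hxy' : x = y := Sum.inl.inj hxy
              exact hij (by rw [← hgx, hxy', hgy])
        · intro hw
          exact ⟨Or.inl hw, Or.inl hw⟩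
    have hmemM : ℓ ∈ M := ⟨F, hp, hd⟩
    exact le_csSup hbddA hmemM
end
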